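/- arXiv:1911.05171 — 6 statements merged into one kernel-verified Lean document; each statement's English description precedes it below -/
import Mathlib

section
/- In the MPL model, fix t ∈ {1,…,n−1} and consider an agent whose true certainty equivalent is exactly x_t. Then Payoff(x_t, t) = u_{x_t}(x_t), and Payoff(x_t, t+1) > Payoff(x_t, t). In particular the report function satisfies r(x_t) ≠ x_t. -/
/-- MPL model: with discretization `x k = x̲ + k·ℓ`, `ℓ = (x̄ − x̲)/n`, strictly
increasing utilities `u c`, stopping probabilities `p t ∈ (0,1]`, payoff
`Payoff c t = p t · u c (x t) + (1 − p t) · u c c`, and report function `r c`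
the unique strict maximizer of `t ↦ Payoff c t` over `{1,…,n}`:
for `t ∈ {1,…,n−1}`, an agent with true certainty equivalent `x t` has
`Payoff (x t) t = u (x t) (x t)` and `Payoff (x t) (t+1) > Payoff (x t) t`;
in particular `r (x t) ≠ x t`. -/
theorem stmt_2
    (xlo xhi : ℝ) (hlohi : xlo < xhi) (n : ℕ) (hn : 2 ≤ n)
    (ℓ : ℝ) (hℓ : ℓ = (xhi - xlo) / n)
    (x : ℕ → ℝ) (hxk : ∀ k : ℕ, x k = xlo + k * ℓ)
    (u : ℝ → ℝ → ℝ)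
    (hu : ∀ c ∈ Set.Ioo xlo xhi, StrictMonoOn (u c) (Set.Icc xlo xhi))
    (p : ℕ → ℝ) (hp : ∀ t ∈ Finset.Icc 1 n, 0 < p t ∧ p t ≤ 1)
    (Payoff : ℝ → ℕ → ℝ)
    (hPayoff : ∀ c t, Payoff c t = p t * u c (x t) + (1 - p t) * u c c)
    (r : ℝ → ℕ)
    (hr_mem : ∀ c ∈ Set.Ioo xlo xhi, r c ∈ Finset.Icc 1 n)
    (hr_max : ∀ c ∈ Set.Ioo xlo xhi, ∀ t ∈ Finset.Icc 1 n, t ≠ r c →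
      Payoff c t < Payoff c (r c))
    (t : ℕ) (ht1 : 1 ≤ t) (ht2 : t ≤ n - 1) :
    Payoff (x t) t = u (x t) (x t) ∧
    Payoff (x t) t < Payoff (x t) (t + 1) ∧
    x (r (x t)) ≠ x t := by
  have hnpos : (0:ℝ) < n := by positivity
  have hℓpos : 0 < ℓ := by
    rw [hℓ]; exact div_pos (by linarith) hnpos
  have hxmono : ∀ i j : ℕ, i < j → x i < x j := by
    intro i j hij
    rw [hxk, hxk]
    have : (i:ℝ) < j := by exact_mod_cast hij
    nlinarith
  have htn : t + 1 ≤ n := by omega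
  have hxn : x n = xhi := by
    rw [hxk, hℓ]; field_simp; ring
  have hx0 : x 0 = xlo := by rw [hxk]; simp
  have hxt : x t ∈ Set.Ioo xlo xhi := by
    constructor
    · rw [← hx0]; exact hxmono 0 t (by omega)
    · rw [← hxn]; exact hxmono t n (by omega)
  have hxt1 : x (t+1) ∈ Set.Icc xlo xhi := by
    constructor
    · rw [← hx0]; exact le_of_lt (hxmono 0 (t+1) (by omega))
    · rw [← hxn]
      rcases eq_or_lt_of_le htn with h | h
      · rw [h]
      · exact le_of_lt (hxmono (t+1) n h)
  have hp1 := hp (t+1) (Finset.mem_Icc.mpr ⟨by omega, htn⟩)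
  have hult : u (x t) (x t) < u (x t) (x (t+1)) :=
    hu (x t) hxt (Set.mem_Icc_of_Ioo hxt) hxt1 (hxmono t (t+1) (by omega))
  have h1 : Payoff (x t) t = u (x t) (x t) := by rw [hPayoff]; ring
  have h2 : Payoff (x t) t < Payoff (x t) (t+1) := by
    rw [h1, hPayoff]; nlinarith [hp1.1, hp1.2]
  refine ⟨h1, h2, ?_⟩
  intro heq
  have hrt : r (x t) = t := by
    by_contra hne
    rcases lt_trichotomy (r (x t)) t with h | h | h
    · exact absurd heq (hxmono _ _ h).ne
    · exact hne h
    · exact absurd heq (hxmono _ _ h).ne'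
  have := hr_max (x t) hxt (t+1) (Finset.mem_Icc.mpr ⟨by omega, htn⟩) (by omega)
  rw [hrt] at this
  linarith
end

section
/- In the MPL model, assume: (i) inverse Lipschitz condition: there is K > 0 such that |u_c(x) − u_c(y)| > K·|x − y| for every certainty equivalent c and all x ≠ y in [x̲, x̄]; (ii) there is M > 0 with u_c(x̄) − u_c(x̲) ≤ M for every c; (iii) the stopping probabilities satisfy p_{t+1} < p_t and p_{t+1} < (K·ℓ/(2M))·p_t for all t; (iv) every agent reports above his true certainty equivalent, i.e. r(c) > c for all c. Then r is injective on {x_1,…,x_{n−1}}: if t₁, t₂ ∈ {1,…,n−1} and r(x_{t₁}) = r(x_{t₂}), then t₁ = t₂. -/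
/-- MPL model, injectivity of the report function on the grid: assuming
(i) an inverse Lipschitz condition with constant `K > 0` for all utilities,
(ii) a uniform bound `M > 0` on `u c x̄ − u c x̲`,
(iii) `p (t+1) < p t` and `p (t+1) < (K·ℓ/(2M))·p t` for all `t`, and
(iv) every agent reports above his true certainty equivalent,
then `r` is injective on `{x 1, …, x (n−1)}`. -/
theorem stmt_3
    (xlo xhi : ℝ) (hlohi : xlo < xhi) (n : ℕ) (hn : 2 ≤ n)
    (ℓ : ℝ) (hℓ : ℓ = (xhi - xlo) / n)
    (x : ℕ → ℝ) (hxk : ∀ k : ℕ, x k = xlo + k * ℓ)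
    (u : ℝ → ℝ → ℝ)
    (hu : ∀ c ∈ Set.Ioo xlo xhi, StrictMonoOn (u c) (Set.Icc xlo xhi))
    (p : ℕ → ℝ) (hp : ∀ t ∈ Finset.Icc 1 n, 0 < p t ∧ p t ≤ 1)
    (Payoff : ℝ → ℕ → ℝ)
    (hPayoff : ∀ c t, Payoff c t = p t * u c (x t) + (1 - p t) * u c c)
    (r : ℝ → ℕ)
    (hr_mem : ∀ c ∈ Set.Ioo xlo xhi, r c ∈ Finset.Icc 1 n)
    (hr_max : ∀ c ∈ Set.Ioo xlo xhi, ∀ t ∈ Finset.Icc 1 n, t ≠ r c →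
      Payoff c t < Payoff c (r c))
    (K : ℝ) (hK : 0 < K)
    (hinvLip : ∀ c ∈ Set.Ioo xlo xhi, ∀ y ∈ Set.Icc xlo xhi, ∀ z ∈ Set.Icc xlo xhi,
      y ≠ z → K * |y - z| < |u c y - u c z|)
    (M : ℝ) (hM : 0 < M)
    (hMb : ∀ c ∈ Set.Ioo xlo xhi, u c xhi - u c xlo ≤ M)
    (hpdec : ∀ t : ℕ, 1 ≤ t → t ≤ n - 1 → p (t + 1) < p t)
    (hpratio : ∀ t : ℕ, 1 ≤ t → t ≤ n - 1 → p (t + 1) < (K * ℓ / (2 * M)) * p t)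
    (hhigh : ∀ c ∈ Set.Ioo xlo xhi, c < x (r c)) :
    ∀ t₁ ∈ Finset.Icc 1 (n - 1), ∀ t₂ ∈ Finset.Icc 1 (n - 1),
      r (x t₁) = r (x t₂) → t₁ = t₂ := by
  have hnR : (0:ℝ) < n := by exact_mod_cast Nat.lt_of_lt_of_le (by norm_num) hn
  have hℓpos : 0 < ℓ := by rw [hℓ]; exact div_pos (by linarith) hnR
  have hxmono : StrictMono x := by
    intro a b hab
    rw [hxk a, hxk b]
    have : (a:ℝ) < b := by exact_mod_cast hab
    nlinarith
  have hx0 : x 0 = xlo := by simp [hxk]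
  have hxn : x n = xhi := by
    rw [hxk, hℓ]; field_simp; ring
  have hIcc : ∀ k, k ≤ n → x k ∈ Set.Icc xlo xhi := by
    intro k hk
    exact ⟨hx0 ▸ hxmono.monotone (Nat.zero_le k), hxn ▸ hxmono.monotone hk⟩
  have key : ∀ t, 1 ≤ t → t ≤ n - 1 → r (x t) = t + 1 := by
    intro t ht1 htn
    have hcmem : x t ∈ Set.Ioo xlo xhi :=
      ⟨hx0 ▸ hxmono (by omega), hxn ▸ hxmono (by omega)⟩
    set c := x t with hc
    set s := r c with hs
    have hsmem := hr_mem c hcmem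
    rw [Finset.mem_Icc] at hsmem
    have hts : t < s := by
      by_contra h
      push_neg at h
      have h1 := hhigh c hcmem
      have h2 : x s ≤ x t := hxmono.monotone h
      rw [← hs] at h1
      linarith
    by_contra hne
    have hs2 : t + 2 ≤ s := by omega
    have hmono := hu c hcmem
    have hxhiIcc : xhi ∈ Set.Icc xlo xhi := ⟨le_of_lt hlohi, le_refl _⟩
    have hxloIcc : xlo ∈ Set.Icc xlo xhi := ⟨le_refl _, le_of_lt hlohi⟩
    have hcIcc : c ∈ Set.Icc xlo xhi := hIcc t (by omega)
    -- upper bound on gain at s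
    have hub : u c (x s) - u c c ≤ M := by
      have h1 : u c (x s) ≤ u c xhi :=
        hmono.monotoneOn (hIcc s hsmem.2) hxhiIcc (hIcc s hsmem.2).2
      have h2 : u c xlo ≤ u c c := hmono.monotoneOn hxloIcc hcIcc hcIcc.1
      have := hMb c hcmem
      linarith
    -- lower bound on gain at t+1
    have hxt1 : x (t + 1) - c = ℓ := by
      rw [hc, hxk (t + 1), hxk t]
      push_cast; ring
    have hxt1Icc : x (t + 1) ∈ Set.Icc xlo xhi := hIcc (t + 1) (by omega)
    have hlt1 : c < x (t + 1) := by linarith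
    have hne1 : x (t + 1) ≠ c := by linarith
    have hlb : K * ℓ < u c (x (t + 1)) - u c c := by
      have h := hinvLip c hcmem (x (t + 1)) hxt1Icc c hcIcc hne1
      have hgt : u c c < u c (x (t + 1)) := hmono hcIcc hxt1Icc hlt1
      rw [hxt1, abs_of_pos hℓpos, abs_of_pos (by linarith)] at h
      exact h
    -- p chain
    have hpchain : ∀ j, t + 2 ≤ j → j ≤ n → p j ≤ p (t + 2) := by
      intro j hj
      induction j, hj using Nat.le_induction with
      | base => intro _; exact le_rfl
      | succ m hm ih =>
        intro hmn
        have hd := hpdec m (by omega) (by omega)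
        exact le_trans (le_of_lt hd) (ih (by omega))
    have hps2 : p s ≤ p (t + 2) := hpchain s hs2 hsmem.2
    have hratio : p (t + 2) < K * ℓ / (2 * M) * p (t + 1) :=
      hpratio (t + 1) (by omega) (by omega)
    have hp1 := hp (t + 1) (by rw [Finset.mem_Icc]; omega)
    have hpspos := (hp s (by rw [Finset.mem_Icc]; omega)).1
    -- optimality
    have hlt := hr_max c hcmem (t + 1) (by rw [Finset.mem_Icc]; omega) (by omega)
    rw [hPayoff, hPayoff, ← hs] at hlt
    have hlt' : p (t + 1) * (u c (x (t + 1)) - u c c) < p s * (u c (x s) - u c c) := by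
      nlinarith [hlt]
    have hA : p (t + 1) * (K * ℓ) < p (t + 1) * (u c (x (t + 1)) - u c c) :=
      mul_lt_mul_of_pos_left hlb hp1.1
    have hB : p s * (u c (x s) - u c c) ≤ p s * M :=
      mul_le_mul_of_nonneg_left hub (le_of_lt hpspos)
    have hC : p s * M ≤ p (t + 2) * M :=
      mul_le_mul_of_nonneg_right hps2 (le_of_lt hM)
    have hD : p (t + 2) * M < (K * ℓ / (2 * M) * p (t + 1)) * M :=
      mul_lt_mul_of_pos_right hratio hM
    have hE : (K * ℓ / (2 * M) * p (t + 1)) * M = p (t + 1) * (K * ℓ) / 2 := by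
      field_simp
    nlinarith [hp1.1, hK, hℓpos]
  rintro t₁ ht₁ t₂ ht₂ hreq
  rw [Finset.mem_Icc] at ht₁ ht₂
  rw [key t₁ ht₁.1 ht₁.2, key t₂ ht₂.1 ht₂.2] at hreq
  omega
end

section
/- In the MPL model, assume: (i) there is K > 0 such that |u_c(x) − u_c(y)| > K·|x − y| for every certainty equivalent c and all x ≠ y in [x̲, x̄]; (ii) there is M > 0 with u_c(x̄) − u_c(x̲) ≤ M for every c; (iii) p_{t+1} < p_t and p_{t+1} < (K·ℓ/(2M))·p_t for all t; (iv) r(c) > c for all c. Then for every t ∈ {1,…,n−1}, r(x_t) = x_{t+1}. -/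
set_option maxHeartbeats 1000000


/-- MPL model, report function on the grid shifts by one: assuming
(i) an inverse Lipschitz condition with constant `K > 0` for all utilities,
(ii) a uniform bound `M > 0` on `u c x̄ − u c x̲`,
(iii) `p (t+1) < p t` and `p (t+1) < (K·ℓ/(2M))·p t` for all `t`, and
(iv) every agent reports above his true certainty equivalent,
then `r (x t) = x (t+1)` for every `t ∈ {1,…,n−1}`. -/
theorem stmt_4
    (xlo xhi : ℝ) (hlohi : xlo < xhi) (n : ℕ) (hn : 2 ≤ n)
    (ℓ : ℝ) (hℓ : ℓ = (xhi - xlo) / n)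
    (x : ℕ → ℝ) (hxk : ∀ k : ℕ, x k = xlo + k * ℓ)
    (u : ℝ → ℝ → ℝ)
    (hu : ∀ c ∈ Set.Ioo xlo xhi, StrictMonoOn (u c) (Set.Icc xlo xhi))
    (p : ℕ → ℝ) (hp : ∀ t ∈ Finset.Icc 1 n, 0 < p t ∧ p t ≤ 1)
    (Payoff : ℝ → ℕ → ℝ)
    (hPayoff : ∀ c t, Payoff c t = p t * u c (x t) + (1 - p t) * u c c)
    (r : ℝ → ℕ)
    (hr_mem : ∀ c ∈ Set.Ioo xlo xhi, r c ∈ Finset.Icc 1 n)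
    (hr_max : ∀ c ∈ Set.Ioo xlo xhi, ∀ t ∈ Finset.Icc 1 n, t ≠ r c →
      Payoff c t < Payoff c (r c))
    (K : ℝ) (hK : 0 < K)
    (hinvLip : ∀ c ∈ Set.Ioo xlo xhi, ∀ y ∈ Set.Icc xlo xhi, ∀ z ∈ Set.Icc xlo xhi,
      y ≠ z → K * |y - z| < |u c y - u c z|)
    (M : ℝ) (hM : 0 < M)
    (hMb : ∀ c ∈ Set.Ioo xlo xhi, u c xhi - u c xlo ≤ M)
    (hpdec : ∀ t : ℕ, 1 ≤ t → t ≤ n - 1 → p (t + 1) < p t)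
    (hpratio : ∀ t : ℕ, 1 ≤ t → t ≤ n - 1 → p (t + 1) < (K * ℓ / (2 * M)) * p t)
    (hhigh : ∀ c ∈ Set.Ioo xlo xhi, c < x (r c)) :
    ∀ t ∈ Finset.Icc 1 (n - 1), r (x t) = t + 1 := by
  intro t ht
  simp only [Finset.mem_Icc] at ht
  obtain ⟨ht1, ht2⟩ := ht
  have htn : t + 1 ≤ n := by omega
  have hnR : (0:ℝ) < n := by exact_mod_cast Nat.pos_of_ne_zero (by omega)
  have hℓpos : 0 < ℓ := by
    rw [hℓ]; exact div_pos (by linarith) hnR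
  have hnl : (n:ℝ) * ℓ = xhi - xlo := by
    rw [hℓ]; field_simp
  have hxmem : ∀ k, k ≤ n → x k ∈ Set.Icc xlo xhi := by
    intro k hk
    have hkR : (k:ℝ) ≤ n := Nat.cast_le.mpr hk
    have hk0 : (0:ℝ) ≤ k := Nat.cast_nonneg k
    rw [hxk]
    constructor
    · nlinarith
    · nlinarith
  set c := x t with hc
  have hcmem : c ∈ Set.Ioo xlo xhi := by
    have h1R : (1:ℝ) ≤ t := by exact_mod_cast ht1
    have h2R : (t:ℝ) + 1 ≤ n := by exact_mod_cast htn
    rw [hc, hxk]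
    constructor
    · nlinarith
    · nlinarith
  have hpmono : ∀ a b : ℕ, 1 ≤ a → a ≤ b → b ≤ n → p b ≤ p a := by
    intro a b ha hab hbn
    induction b with
    | zero => omega
    | succ m ih =>
      rcases Nat.eq_or_lt_of_le hab with h | h
      · rw [← h]
      · have h1 : a ≤ m := by omega
        have h2 := hpdec m (by omega) (by omega)
        have h3 := ih h1 (by omega)
        linarith
  have hsmem := hr_mem c hcmem
  simp only [Finset.mem_Icc] at hsmem
  set s := r c with hs
  have hts : t < s := by
    by_contra h
    push_neg at h
    have hsR : (s:ℝ) ≤ t := Nat.cast_le.mpr h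
    have h2 : x t < x s := hhigh c hcmem
    rw [hxk t, hxk s] at h2
    nlinarith
  by_contra hne
  have hst2 : t + 2 ≤ s := by omega
  have hne' : t + 1 ≠ s := by omega
  have hkey := hr_max c hcmem (t + 1) (by simp only [Finset.mem_Icc]; omega) hne'
  rw [hPayoff, hPayoff] at hkey
  -- utility facts
  have hmono := hu c hcmem
  have hxt1 : x t < x (t + 1) := by
    rw [hxk, hxk]; push_cast; nlinarith
  have hA : K * ℓ < u c (x (t + 1)) - u c c := by
    have hne2 : x (t + 1) ≠ x t := ne_of_gt hxt1
    have h := hinvLip c hcmem (x (t + 1)) (hxmem _ htn) (x t) (hxmem t (by omega)) hne2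
    have habs : |x (t + 1) - x t| = ℓ := by
      rw [hxk, hxk]; push_cast; rw [abs_of_pos (by nlinarith)]; ring
    have hmlt : u c (x t) < u c (x (t + 1)) :=
      hmono (hxmem t (by omega)) (hxmem _ htn) hxt1
    rw [habs, abs_of_pos (by linarith)] at h
    rw [hc]
    linarith
  have hB : u c (x s) - u c c ≤ M := by
    have h1 : u c (x s) ≤ u c xhi := by
      rcases eq_or_lt_of_le (hxmem s hsmem.2).2 with h | h
      · rw [h]
      · exact le_of_lt (hmono (hxmem s hsmem.2) (Set.mem_Icc.mpr ⟨le_of_lt hlohi, le_refl _⟩) h)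
    have h2 : u c xlo ≤ u c c := by
      have hcm : c ∈ Set.Icc xlo xhi := Set.mem_Icc.mpr ⟨le_of_lt hcmem.1, le_of_lt hcmem.2⟩
      exact le_of_lt (hmono (Set.mem_Icc.mpr ⟨le_refl _, le_of_lt hlohi⟩) hcm hcmem.1)
    have := hMb c hcmem
    linarith
  have hps := (hp s (by simp only [Finset.mem_Icc]; omega))
  have hpt1 := (hp (t + 1) (by simp only [Finset.mem_Icc]; omega))
  have hchain : p s ≤ p (t + 2) := hpmono (t + 2) s (by omega) hst2 hsmem.2
  have hratio := hpratio (t + 1) (by omega) (by omega)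
  have heq : K * ℓ / (2 * M) * p (t + 1) * M = K * ℓ * p (t + 1) / 2 := by
    field_simp
  -- from hkey: p (t+1) * (u c (x (t+1)) - u c c) < p s * (u c (x s) - u c c)
  have hkey' : p (t + 1) * (u c (x (t + 1)) - u c c) < p s * (u c (x s) - u c c) := by
    ring_nf
    ring_nf at hkey
    linarith
  have h5 : p s * (u c (x s) - u c c) ≤ p s * M :=
    mul_le_mul_of_nonneg_left hB (le_of_lt hps.1)
  have h6 : p s * M ≤ p (t + 2) * M :=
    mul_le_mul_of_nonneg_right hchain (le_of_lt hM)
  have h7 : p (t + 2) * M < K * ℓ * p (t + 1) / 2 := by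
    calc p (t + 2) * M < K * ℓ / (2 * M) * p (t + 1) * M :=
          mul_lt_mul_of_pos_right hratio hM
      _ = K * ℓ * p (t + 1) / 2 := heq
  have h8 : p (t + 1) * (K * ℓ) < p (t + 1) * (u c (x (t + 1)) - u c c) :=
    mul_lt_mul_of_pos_left hA hpt1.1
  have hpos : 0 < p (t + 1) * (K * ℓ) := mul_pos hpt1.1 (mul_pos hK hℓpos)
  have h9 : K * ℓ * p (t + 1) = p (t + 1) * (K * ℓ) := by ring
  linarith
end

section
/- In the MPL model, assume additionally: (i) there are constants C₁, C₂ > 0 such that for all certainty equivalents c, c* and all x', x'' ∈ (x̲, x̄), |u_c(x') − u_{c*}(x'')| ≤ C₁·|c − c*| + C₂·|x' − x''|; (ii) there is λ > 0 such that |Payoff(c, s) − Payoff(c, t)| ≥ λ for every c and all s ≠ t; (iii) monotonicity: if c* ≥ c then u_{c*}(y) ≥ u_c(y) for all y. Let t ∈ {1,…,n−1} and suppose x_{t−1} < c < c* ≤ x_t with c* − c < λ/(2·(2C₁ + C₂)), and r(c*) ≤ x_{t+1}. Then r(c) ≤ x_{t+1}. -/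
set_option maxHeartbeats 1000000 in
/-- MPL model, weak monotonicity of the report function: assume additionally
(i) a Lipschitz-type condition across types and arguments with constants `C₁, C₂ > 0`,
(ii) a payoff gap `λ > 0` between distinct reports, and
(iii) agents with higher certainty equivalents value money more.
If `t ∈ {1,…,n−1}`, `x (t−1) < c < c* ≤ x t` with `c* − c < λ/(2(2C₁+C₂))`, and
`r c* ≤ x (t+1)`, then `r c ≤ x (t+1)`. -/
theorem stmt_5
    (xlo xhi : ℝ) (hlohi : xlo < xhi) (n : ℕ) (hn : 2 ≤ n)
    (ℓ : ℝ) (hℓ : ℓ = (xhi - xlo) / n)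
    (x : ℕ → ℝ) (hxk : ∀ k : ℕ, x k = xlo + k * ℓ)
    (u : ℝ → ℝ → ℝ)
    (hu : ∀ c ∈ Set.Ioo xlo xhi, StrictMonoOn (u c) (Set.Icc xlo xhi))
    (p : ℕ → ℝ) (hp : ∀ t ∈ Finset.Icc 1 n, 0 < p t ∧ p t ≤ 1)
    (Payoff : ℝ → ℕ → ℝ)
    (hPayoff : ∀ c t, Payoff c t = p t * u c (x t) + (1 - p t) * u c c)
    (r : ℝ → ℕ)
    (hr_mem : ∀ c ∈ Set.Ioo xlo xhi, r c ∈ Finset.Icc 1 n)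
    (hr_max : ∀ c ∈ Set.Ioo xlo xhi, ∀ t ∈ Finset.Icc 1 n, t ≠ r c →
      Payoff c t < Payoff c (r c))
    (C₁ C₂ : ℝ) (hC₁ : 0 < C₁) (hC₂ : 0 < C₂)
    (hLip : ∀ c ∈ Set.Ioo xlo xhi, ∀ c' ∈ Set.Ioo xlo xhi,
      ∀ y ∈ Set.Ioo xlo xhi, ∀ z ∈ Set.Ioo xlo xhi,
        |u c y - u c' z| ≤ C₁ * |c - c'| + C₂ * |y - z|)
    (lam : ℝ) (hlam : 0 < lam)
    (hgap : ∀ c ∈ Set.Ioo xlo xhi, ∀ s ∈ Finset.Icc 1 n, ∀ t ∈ Finset.Icc 1 n,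
      s ≠ t → lam ≤ |Payoff c s - Payoff c t|)
    (hmono : ∀ c ∈ Set.Ioo xlo xhi, ∀ c' ∈ Set.Ioo xlo xhi, c ≤ c' →
      ∀ y, u c y ≤ u c' y)
    (t : ℕ) (ht1 : 1 ≤ t) (ht2 : t ≤ n - 1)
    (c cst : ℝ) (h1 : x (t - 1) < c) (h2 : c < cst) (h3 : cst ≤ x t)
    (h4 : cst - c < lam / (2 * (2 * C₁ + C₂)))
    (h5 : x (r cst) ≤ x (t + 1)) :
    x (r c) ≤ x (t + 1) := by

  have hn0 : (0:ℝ) < n := by exact_mod_cast lt_of_lt_of_le (by norm_num) hn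
  have hℓpos : 0 < ℓ := by rw [hℓ]; exact div_pos (by linarith) hn0
  have hxn : x n = xhi := by
    rw [hxk, hℓ]; field_simp; ring
  have hxlt : ∀ j k : ℕ, j < k → x j < x k := by
    intro j k hjk
    rw [hxk, hxk]
    have h : (j:ℝ) < k := by exact_mod_cast hjk
    nlinarith
  have hxle : ∀ j k : ℕ, j ≤ k → x j ≤ x k := by
    intro j k hjk
    rcases eq_or_lt_of_le hjk with h | h
    · rw [h]
    · exact le_of_lt (hxlt _ _ h)
  have htn : t < n := by omega
  have hc : c ∈ Set.Ioo xlo xhi := by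
    constructor
    · have : xlo ≤ x (t-1) := by
        rw [hxk]
        have : (0:ℝ) ≤ (t-1 : ℕ) := Nat.cast_nonneg _
        nlinarith
      linarith
    · have : x t < xhi := by rw [← hxn]; exact hxlt _ _ htn
      linarith
  have hcst : cst ∈ Set.Ioo xlo xhi := by
    constructor
    · linarith [hc.1]
    · have : x t < xhi := by rw [← hxn]; exact hxlt _ _ htn
      linarith
  by_cases hcase : t + 1 = n
  · -- trivial case: r c ≤ n = t+1
    have := hr_mem c hc
    simp only [Finset.mem_Icc] at this
    have : r c ≤ t + 1 := by omega
    exact hxle _ _ this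
  -- main case: t + 1 < n
  have htn1 : t + 1 < n := by omega
  set s := r c with hs_def
  set s' := r cst with hs'_def
  have hs : s ∈ Finset.Icc 1 n := hr_mem c hc
  have hs' : s' ∈ Finset.Icc 1 n := hr_mem cst hcst
  have hs'le : s' ≤ t + 1 := by
    by_contra hcon
    push_neg at hcon
    exact absurd h5 (not_le.mpr (hxlt _ _ hcon))
  suffices hkey : s = s' by
    rw [hkey]; exact h5
  by_contra hne
  -- x s' is interior
  have hs'mem : Finset.mem_Icc.mp hs' = Finset.mem_Icc.mp hs' := rfl
  obtain ⟨hs'1, hs'n⟩ := Finset.mem_Icc.mp hs'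
  have hxs' : x s' ∈ Set.Ioo xlo xhi := by
    constructor
    · have := hxlt 0 s' (by omega)
      rw [hxk 0] at this
      simpa using this
    · rw [← hxn]; exact hxlt _ _ (by omega)
  -- payoff gap at c
  have hlt1 : Payoff c s' < Payoff c s := hr_max c hc s' hs' (fun h => hne h.symm)
  have hgap1 : lam ≤ Payoff c s - Payoff c s' := by
    have := hgap c hc s hs s' hs' hne
    rwa [abs_of_pos (by linarith)] at this
  -- Payoff cst s ≥ Payoff c s by monotonicity
  obtain ⟨hps0, hps1⟩ := hp s hs
  obtain ⟨hps'0, hps'1⟩ := hp s' hs'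
  have hm1 : u c (x s) ≤ u cst (x s) := hmono c hc cst hcst (le_of_lt h2) _
  have hm2 : u c c ≤ u cst cst := by
    have h21 : u c c < u c cst := hu c hc ⟨le_of_lt hc.1, le_of_lt hc.2⟩
      ⟨le_of_lt hcst.1, le_of_lt hcst.2⟩ h2
    have h22 : u c cst ≤ u cst cst := hmono c hc cst hcst (le_of_lt h2) _
    linarith
  have hB : Payoff c s ≤ Payoff cst s := by
    rw [hPayoff, hPayoff]
    nlinarith
  -- Lipschitz bound at s'
  have habs : |c - cst| = cst - c := by
    rw [abs_sub_comm, abs_of_pos (by linarith)]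
  have hL1 : |u c (x s') - u cst (x s')| ≤ C₁ * (cst - c) := by
    have := hLip c hc cst hcst (x s') hxs' (x s') hxs'
    rwa [habs, sub_self, abs_zero, mul_zero, add_zero] at this
  have hL2 : |u c c - u cst cst| ≤ C₁ * (cst - c) + C₂ * (cst - c) := by
    have h := hLip c hc cst hcst c hc cst hcst
    rwa [habs] at h
  have hδ : (2 * C₁ + C₂) * (cst - c) < lam / 2 := by
    rw [lt_div_iff₀ (by positivity)] at h4
    nlinarith
  have e1 : |p s' * (u c (x s') - u cst (x s'))| ≤ p s' * (C₁ * (cst - c)) := by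
    rw [abs_mul, abs_of_pos hps'0]
    exact mul_le_mul_of_nonneg_left hL1 (le_of_lt hps'0)
  have e2 : |(1 - p s') * (u c c - u cst cst)|
      ≤ (1 - p s') * (C₁ * (cst - c) + C₂ * (cst - c)) := by
    rw [abs_mul, abs_of_nonneg (by linarith : (0:ℝ) ≤ 1 - p s')]
    exact mul_le_mul_of_nonneg_left hL2 (by linarith)
  have hexp : Payoff c s' - Payoff cst s' =
      p s' * (u c (x s') - u cst (x s')) + (1 - p s') * (u c c - u cst cst) := by
    rw [hPayoff, hPayoff]; ring
  have hD : |Payoff c s' - Payoff cst s'| < lam / 2 := by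
    rw [hexp]
    have habsadd := abs_add_le (p s' * (u c (x s') - u cst (x s')))
      ((1 - p s') * (u c c - u cst cst))
    have hsum : p s' * (C₁ * (cst - c)) + (1 - p s') * (C₁ * (cst - c) + C₂ * (cst - c))
        ≤ (2 * C₁ + C₂) * (cst - c) := by nlinarith [mul_nonneg hps'0.le (mul_pos hC₂ (sub_pos.mpr h2)).le, mul_pos hC₁ (sub_pos.mpr h2)]
    linarith
  have hD' : Payoff cst s' - Payoff c s' < lam / 2 := by
    have := abs_lt.mp hD
    linarith [this.1]
  -- contradiction
  have hfin : Payoff cst s' < Payoff cst s := by linarith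
  have := hr_max cst hcst s hs hne
  linarith
end

section
/- Let n ≥ 1 and let α, β, γ ∈ ℝⁿ be nonzero vectors. Then ⟨α, β/‖β‖⟩ > ⟨α, γ/‖γ‖⟩ if and only if ‖α/‖α‖ − β/‖β‖‖ < ‖α/‖α‖ − γ/‖γ‖‖. -/
open scoped RealInnerProductSpace

/-- Effectiveness of the spherical scoring rule with respect to the renormalized
`L²` metric: for nonzero `α, β, γ ∈ ℝⁿ`,
`⟪α, β/‖β‖⟫ > ⟪α, γ/‖γ‖⟫` iff `‖α/‖α‖ − β/‖β‖‖ < ‖α/‖α‖ − γ/‖γ‖‖`. -/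
theorem stmt_10 (n : ℕ) (hn : 1 ≤ n) (α β γ : EuclideanSpace ℝ (Fin n))
    (hα : α ≠ 0) (hβ : β ≠ 0) (hγ : γ ≠ 0) :
    ⟪α, ‖β‖⁻¹ • β⟫ > ⟪α, ‖γ‖⁻¹ • γ⟫ ↔
      ‖‖α‖⁻¹ • α - ‖β‖⁻¹ • β‖ < ‖‖α‖⁻¹ • α - ‖γ‖⁻¹ • γ‖ := by
  have ha : ‖α‖ > 0 := norm_pos_iff.mpr hα
  set a := ‖α‖⁻¹ • α with hadef
  set b := ‖β‖⁻¹ • β with hbdef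
  set c := ‖γ‖⁻¹ • γ with hcdef
  have hna : ‖a‖ = 1 := norm_smul_inv_norm hα
  have hnb : ‖b‖ = 1 := norm_smul_inv_norm hβ
  have hnc : ‖c‖ = 1 := norm_smul_inv_norm hγ
  have hαa : α = ‖α‖ • a := by
    rw [hadef, smul_smul, mul_inv_cancel₀ (ne_of_gt ha), one_smul]
  have key : ∀ x : EuclideanSpace ℝ (Fin n), ‖x‖ = 1 →
      ‖a - x‖ ^ 2 = 2 - 2 * ⟪a, x⟫ := by
    intro x hx
    rw [← real_inner_self_eq_norm_sq, inner_sub_sub_self, real_inner_self_eq_norm_sq,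
      real_inner_self_eq_norm_sq, hna, hx, real_inner_comm x a]
    ring
  have hib : ∀ x : EuclideanSpace ℝ (Fin n), ⟪α, x⟫ = ‖α‖ * ⟪a, x⟫ := by
    intro x
    rw [hadef, real_inner_smul_left]
    field_simp
  rw [gt_iff_lt, hib c, hib b, mul_lt_mul_iff_right₀ ha]
  constructor
  · intro h
    nlinarith [norm_nonneg (a - b), norm_nonneg (a - c), key b hnb, key c hnc]
  · intro h
    nlinarith [norm_nonneg (a - b), norm_nonneg (a - c), key b hnb, key c hnc]
end

section
/- Let n ≥ 1, let α, β, α^h, β^h ∈ ℝⁿ be nonzero vectors, and let λ > 0. Suppose ‖α/‖α‖ − β/‖β‖‖ > 2λ, ‖α/‖α‖ − α^h/‖α^h‖‖ ≤ λ, and ‖β/‖β‖ − β^h/‖β^h‖‖ ≤ λ. Then ⟨α, α^h/‖α^h‖⟩ > ⟨α, β^h/‖β^h‖⟩. -/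
open scoped RealInnerProductSpace

/-- A misreport whose renormalization is more than `2λ` from the truth yields a
strictly worse spherical score: for nonzero `α, β, αʰ, βʰ ∈ ℝⁿ` and `λ > 0`, if
`‖α/‖α‖ − β/‖β‖‖ > 2λ`, `‖α/‖α‖ − αʰ/‖αʰ‖‖ ≤ λ`, and `‖β/‖β‖ − βʰ/‖βʰ‖‖ ≤ λ`,
then `⟪α, αʰ/‖αʰ‖⟫ > ⟪α, βʰ/‖βʰ‖⟫`. -/
theorem stmt_15 (n : ℕ) (hn : 1 ≤ n) (α β αh βh : EuclideanSpace ℝ (Fin n))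
    (hα : α ≠ 0) (hβ : β ≠ 0) (hαh : αh ≠ 0) (hβh : βh ≠ 0)
    (lam : ℝ) (hlam : 0 < lam)
    (hfar : ‖‖α‖⁻¹ • α - ‖β‖⁻¹ • β‖ > 2 * lam)
    (hα_close : ‖‖α‖⁻¹ • α - ‖αh‖⁻¹ • αh‖ ≤ lam)
    (hβ_close : ‖‖β‖⁻¹ • β - ‖βh‖⁻¹ • βh‖ ≤ lam) :
    ⟪α, ‖αh‖⁻¹ • αh⟫ > ⟪α, ‖βh‖⁻¹ • βh⟫ := by
  set u := ‖α‖⁻¹ • α with hu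
  set v := ‖β‖⁻¹ • β with hv
  set a := ‖αh‖⁻¹ • αh with ha
  set b := ‖βh‖⁻¹ • βh with hb
  have hαpos : (0:ℝ) < ‖α‖ := norm_pos_iff.mpr hα
  have hnu : ‖u‖ = 1 := by
    rw [hu, norm_smul, norm_inv, norm_norm, inv_mul_cancel₀ (ne_of_gt hαpos)]
  have hna : ‖a‖ = 1 := by
    rw [ha, norm_smul, norm_inv, norm_norm,
      inv_mul_cancel₀ (norm_ne_zero_iff.mpr hαh)]
  have hnb : ‖b‖ = 1 := by
    rw [hb, norm_smul, norm_inv, norm_norm,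
      inv_mul_cancel₀ (norm_ne_zero_iff.mpr hβh)]
  -- ‖u - b‖ > lam
  have hub : ‖u - b‖ > lam := by
    have htri : ‖u - v‖ ≤ ‖u - b‖ + ‖v - b‖ := by
      have := norm_sub_le_norm_sub_add_norm_sub u b v
      calc ‖u - v‖ = ‖u - v‖ := rfl
        _ ≤ ‖u - b‖ + ‖b - v‖ := norm_sub_le_norm_sub_add_norm_sub u b v
        _ = ‖u - b‖ + ‖v - b‖ := by rw [norm_sub_rev b v]
    linarith
  have hua : ‖u - a‖ ≤ lam := hα_close
  have hsq : ‖u - a‖ ^ 2 < ‖u - b‖ ^ 2 := by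
    have h0 : (0:ℝ) ≤ ‖u - a‖ := norm_nonneg _
    nlinarith
  -- inner products on unit sphere
  have hia : ⟪u, a⟫ = 1 - ‖u - a‖ ^ 2 / 2 := by
    have := @norm_sub_sq_real (EuclideanSpace ℝ (Fin n)) _ _ u a
    rw [hnu, hna] at this
    linarith
  have hib : ⟪u, b⟫ = 1 - ‖u - b‖ ^ 2 / 2 := by
    have := @norm_sub_sq_real (EuclideanSpace ℝ (Fin n)) _ _ u b
    rw [hnu, hnb] at this
    linarith
  have huab : ⟪u, b⟫ < ⟪u, a⟫ := by rw [hia, hib]; linarith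
  have hαu : α = ‖α‖ • u := by
    rw [hu, smul_smul, mul_inv_cancel₀ (ne_of_gt hαpos), one_smul]
  have key : ∀ x : EuclideanSpace ℝ (Fin n), ⟪α, x⟫ = ‖α‖ * ⟪u, x⟫ := by
    intro x
    conv_lhs => rw [hαu]
    rw [real_inner_smul_left]
  rw [gt_iff_lt, key a, key b]
  exact mul_lt_mul_of_pos_left huab hαpos
end
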